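/- Let G be a finite simple graph with no isolated vertices that is (H1, H2, C6)-free, and let S be an S(G)-set. If γt(G) = 2γ(G), then S is both a packing and a dominating set of G. -/
import Mathlib
set_option maxRecDepth 10000
set_option linter.unusedSectionVars false

open SimpleGraph

namespace TotalDom

variable {V : Type*}
/-- The closed neighborhood `N[v]` of a vertex. -/
def cnbr (G : SimpleGraph V) (v : V) : Set V := insert v (G.neighborSet v)

/-- `S` is a dominating set: every vertex outside `S` has a neighbor in `S`. -/
def IsDomSet (G : SimpleGraph V) (S : Set V) : Prop := ∀ v ∉ S, ∃ u ∈ S, G.Adj u v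

/-- `S` is a total dominating set: every vertex has a neighbor in `S`. -/
def IsTotalDomSet (G : SimpleGraph V) (S : Set V) : Prop := ∀ v : V, ∃ u ∈ S, G.Adj u v

/-- The domination number `γ(G)`. -/
noncomputable def domNum (G : SimpleGraph V) : ℕ :=
  sInf {n | ∃ S : Set V, IsDomSet G S ∧ S.ncard = n}

/-- The total domination number `γₜ(G)`. -/
noncomputable def totalDomNum (G : SimpleGraph V) : ℕ :=
  sInf {n | ∃ S : Set V, IsTotalDomSet G S ∧ S.ncard = n}

/-- A minimum dominating set (γ-set). -/
def IsMinDomSet (G : SimpleGraph V) (S : Set V) : Prop := IsDomSet G S ∧ S.ncard = domNum G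

/-- `S` is a packing: closed neighborhoods of distinct members are disjoint. -/
def IsPacking (G : SimpleGraph V) (S : Set V) : Prop :=
  S.Pairwise fun u v => Disjoint (cnbr G u) (cnbr G v)

/-- `M(v)`: neighbors of `v` having a neighbor outside `N[v]`. -/
def Mset (G : SimpleGraph V) (v : V) : Set V :=
  {u | G.Adj v u ∧ ∃ w, G.Adj u w ∧ w ∉ cnbr G v}

/-- `D(v)`: neighbors `u` of `v` that are not true twins of `v` with `N[u] ⊆ N[v]`. -/
def Dset (G : SimpleGraph V) (v : V) : Set V :=
  {u | G.Adj v u ∧ cnbr G u ≠ cnbr G v ∧ cnbr G u ⊆ cnbr G v}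

/-- `T(v)`: `v` together with its true twins. -/
def Tset (G : SimpleGraph V) (v : V) : Set V := {u | cnbr G u = cnbr G v}

/-- A non-isolated vertex `v` is special if no `u ∈ M(v)` satisfies `D(v) ⊆ N(u)`. -/
def Special (G : SimpleGraph V) (v : V) : Prop :=
  (G.neighborSet v).Nonempty ∧ ¬ ∃ u ∈ Mset G v, Dset G v ⊆ G.neighborSet u

/-- An `S(G)`-set: a set of special vertices containing exactly one vertex from each
true-twin equivalence class of special vertices. -/
def IsSGSet (G : SimpleGraph V) (S : Set V) : Prop :=
  (∀ u ∈ S, Special G u) ∧ ∀ v, Special G v → ∃! u, u ∈ S ∧ u ∈ Tset G v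

/-- `G` has no isolated vertices. -/
def NoIsolated (G : SimpleGraph V) : Prop := ∀ v : V, ∃ u, G.Adj v u

/-- `G` contains no induced copy of `H`. -/
def Free {α : Type*} (H : SimpleGraph α) (G : SimpleGraph V) : Prop := IsEmpty (H ↪g G)

/-- `H₁`: a 6-cycle plus one chord between vertices at distance two along the cycle. -/
def H1 : SimpleGraph (Fin 6) := cycleGraph 6 ⊔ fromEdgeSet {s(0, 2)}

/-- `H₂`: a 6-cycle `x₁x₂x₃x₄x₅x₆` plus the chords `x₂x₆` and `x₃x₅`. -/
def H2 : SimpleGraph (Fin 6) := cycleGraph 6 ⊔ fromEdgeSet {s(1, 5), s(2, 4)}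

/-- A leaf: a vertex of degree one. -/
def IsLeaf (G : SimpleGraph V) (v : V) : Prop := ∃! u, G.Adj v u

/-- A support vertex: a vertex adjacent to a leaf. -/
def IsSupport (G : SimpleGraph V) (v : V) : Prop := ∃ u, G.Adj v u ∧ IsLeaf G u

/-- `sup(G)`: the set of support vertices. -/
def supSet (G : SimpleGraph V) : Set V := {v | IsSupport G v}

section Lemmas

variable {V : Type*}

lemma mem_cnbr {G : SimpleGraph V} {v w : V} : w ∈ cnbr G v ↔ w = v ∨ G.Adj v w := by
  simp [cnbr]

lemma self_mem_cnbr (G : SimpleGraph V) (v : V) : v ∈ cnbr G v := mem_cnbr.mpr (Or.inl rfl)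

lemma mem_cnbr_of_adj {G : SimpleGraph V} {v w : V} (h : G.Adj v w) : w ∈ cnbr G v :=
  mem_cnbr.mpr (Or.inr h)

lemma adj_of_mem_cnbr {G : SimpleGraph V} {v w : V} (h : w ∈ cnbr G v) (hne : w ≠ v) :
    G.Adj v w := (mem_cnbr.mp h).resolve_left hne

lemma cnbr_comm {G : SimpleGraph V} {v w : V} (h : w ∈ cnbr G v) : v ∈ cnbr G w := by
  rcases mem_cnbr.mp h with rfl | hadj
  · exact self_mem_cnbr G w
  · exact mem_cnbr.mpr (Or.inr hadj.symm)

lemma inj6 {α : Type*} {v0 v1 v2 v3 v4 v5 : α}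
    (e01 : v0 ≠ v1) (e02 : v0 ≠ v2) (e03 : v0 ≠ v3) (e04 : v0 ≠ v4) (e05 : v0 ≠ v5)
    (e12 : v1 ≠ v2) (e13 : v1 ≠ v3) (e14 : v1 ≠ v4) (e15 : v1 ≠ v5)
    (e23 : v2 ≠ v3) (e24 : v2 ≠ v4) (e25 : v2 ≠ v5)
    (e34 : v3 ≠ v4) (e35 : v3 ≠ v5) (e45 : v4 ≠ v5) :
    Function.Injective ![v0, v1, v2, v3, v4, v5] := by
  intro i j hij
  fin_cases i <;> fin_cases j <;>
    simp only [Matrix.cons_val_zero, Matrix.cons_val_one, Matrix.head_cons,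
      Matrix.cons_val_succ, Fin.mk_zero, Fin.mk_one] at hij ⊢ <;>
    first | rfl | exact absurd hij ‹_› | exact absurd hij.symm ‹_›

lemma no_config (G : SimpleGraph V)
    (hH1 : Free H1 G) (hH2 : Free H2 G) (hC6 : Free (cycleGraph 6) G)
    (v0 v1 v2 v3 v4 v5 : V)
    (a01 : G.Adj v0 v1) (a12 : G.Adj v1 v2) (a23 : G.Adj v2 v3)
    (a34 : G.Adj v3 v4) (a45 : G.Adj v4 v5) (a05 : G.Adj v0 v5)
    (n02 : ¬ G.Adj v0 v2) (n03 : ¬ G.Adj v0 v3) (n04 : ¬ G.Adj v0 v4)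
    (n13 : ¬ G.Adj v1 v3) (n14 : ¬ G.Adj v1 v4) (n25 : ¬ G.Adj v2 v5)
    (n35 : ¬ G.Adj v3 v5)
    (e02 : v0 ≠ v2) (e03 : v0 ≠ v3) (e04 : v0 ≠ v4) (e13 : v1 ≠ v3)
    (e14 : v1 ≠ v4) (e25 : v2 ≠ v5) (e35 : v3 ≠ v5) (e15 : v1 ≠ v5)
    (e24 : v2 ≠ v4) : False := by
  have e01 := a01.ne
  have e12 := a12.ne
  have e23 := a23.ne
  have e34 := a34.ne
  have e45 := a45.ne
  have e05 := a05.ne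
  have b01 := a01.symm; have b12 := a12.symm; have b23 := a23.symm
  have b34 := a34.symm; have b45 := a45.symm; have b05 := a05.symm
  have m02 : ¬ G.Adj v2 v0 := fun hh => n02 hh.symm
  have m03 : ¬ G.Adj v3 v0 := fun hh => n03 hh.symm
  have m04 : ¬ G.Adj v4 v0 := fun hh => n04 hh.symm
  have m13 : ¬ G.Adj v3 v1 := fun hh => n13 hh.symm
  have m14 : ¬ G.Adj v4 v1 := fun hh => n14 hh.symm
  have m25 : ¬ G.Adj v5 v2 := fun hh => n25 hh.symm
  have m35 : ¬ G.Adj v5 v3 := fun hh => n35 hh.symm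
  have ir0 := G.irrefl (v := v0); have ir1 := G.irrefl (v := v1)
  have ir2 := G.irrefl (v := v2); have ir3 := G.irrefl (v := v3)
  have ir4 := G.irrefl (v := v4); have ir5 := G.irrefl (v := v5)
  by_cases h15 : G.Adj v1 v5 <;> by_cases h24 : G.Adj v2 v4
  case pos =>
    have h51 := h15.symm; have h42 := h24.symm
    refine hH2.false ⟨⟨![v0,v1,v2,v3,v4,v5],
      inj6 e01 e02 e03 e04 e05 e12 e13 e14 e15 e23 e24 e25 e34 e35 e45⟩, ?_⟩
    intro a b
    fin_cases a <;> fin_cases b <;> simp (config := { decide := true }) [H2] <;> assumption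
  case neg =>
    have h51 := h15.symm
    have m24 := h24; have m42 : ¬ G.Adj v4 v2 := fun hh => h24 hh.symm
    refine hH1.false ⟨⟨![v1,v0,v5,v4,v3,v2],
      inj6 e01.symm e15 e14 e13 e12 e05 e04 e03 e02 e45.symm e35.symm e25.symm e34.symm e24.symm e23.symm⟩, ?_⟩
    intro a b
    fin_cases a <;> fin_cases b <;> simp (config := { decide := true }) [H1] <;> assumption
  case pos =>
    have m15 := h15; have m51 : ¬ G.Adj v5 v1 := fun hh => h15 hh.symm
    have h42 := h24.symm
    refine hH1.false ⟨⟨![v2,v3,v4,v5,v0,v1],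
      inj6 e23 e24 e25 e02.symm e12.symm e34 e35 e03.symm e13.symm e45 e04.symm e14.symm e05.symm e15.symm e01⟩, ?_⟩
    intro a b
    fin_cases a <;> fin_cases b <;> simp (config := { decide := true }) [H1] <;> assumption
  case neg =>
    have m15 := h15; have m51 : ¬ G.Adj v5 v1 := fun hh => h15 hh.symm
    have m24 := h24; have m42 : ¬ G.Adj v4 v2 := fun hh => h24 hh.symm
    refine hC6.false ⟨⟨![v0,v1,v2,v3,v4,v5],
      inj6 e01 e02 e03 e04 e05 e12 e13 e14 e15 e23 e24 e25 e34 e35 e45⟩, ?_⟩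
    intro a b
    fin_cases a <;> fin_cases b <;>
      simp (config := { decide := true }) [cycleGraph_adj] <;> assumption

lemma exists_gammaSet [Fintype V] (G : SimpleGraph V) :
    ∃ D : Set V, IsDomSet G D ∧ D.ncard = domNum G := by
  have hne : {n | ∃ S : Set V, IsDomSet G S ∧ S.ncard = n}.Nonempty :=
    ⟨(Set.univ : Set V).ncard, Set.univ, fun v hv => absurd (Set.mem_univ v) hv, rfl⟩
  obtain ⟨D, hD, hc⟩ := Nat.sInf_mem hne
  exact ⟨D, hD, hc⟩

lemma totalDomNum_le [Fintype V] {G : SimpleGraph V} {T : Set V} (hT : IsTotalDomSet G T) :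
    totalDomNum G ≤ T.ncard := Nat.sInf_le ⟨T, hT, rfl⟩

lemma exists_dominator {G : SimpleGraph V} {D : Set V} (hD : IsDomSet G D) (w : V) :
    ∃ e ∈ D, w ∈ cnbr G e := by
  by_cases hw : w ∈ D
  · exact ⟨w, hw, self_mem_cnbr G w⟩
  · obtain ⟨e, he, hadj⟩ := hD w hw
    exact ⟨e, he, mem_cnbr_of_adj hadj⟩

end Lemmas
section Lemmas2

variable {V : Type*} [Fintype V] {G : SimpleGraph V}

lemma gammaSet_packing (hiso : NoIsolated G) (h : totalDomNum G = 2 * domNum G)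
    {D : Set V} (hD : IsDomSet G D) (hc : D.ncard = domNum G) : IsPacking G D := by
  intro u hu v hv huv
  by_contra hdis
  obtain ⟨x, hxu, hxv⟩ := Set.not_disjoint_iff.mp hdis
  choose f hf using hiso
  set T : Set V := (D ∪ f '' (D \ {u, v})) ∪ {x} with hT
  have hTtot : IsTotalDomSet G T := by
    intro w
    by_cases hwD : w ∈ D
    · by_cases hwu : w = u
      · subst hwu
        rcases mem_cnbr.mp hxu with rfl | hadj
        · rcases mem_cnbr.mp hxv with rfl | hadj2
          · exact absurd rfl huv
          · exact ⟨v, Or.inl (Or.inl hv), hadj2⟩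
        · exact ⟨x, Or.inr rfl, hadj.symm⟩
      · by_cases hwv : w = v
        · subst hwv
          rcases mem_cnbr.mp hxv with rfl | hadj
          · rcases mem_cnbr.mp hxu with rfl | hadj2
            · exact absurd rfl huv
            · exact ⟨u, Or.inl (Or.inl hu), hadj2⟩
          · exact ⟨x, Or.inr rfl, hadj.symm⟩
        · have hmem : w ∈ D \ {u, v} := ⟨hwD, by simp [hwu, hwv]⟩
          exact ⟨f w, Or.inl (Or.inr ⟨w, hmem, rfl⟩), (hf w).symm⟩
    · obtain ⟨e, he, hadj⟩ := hD w hwD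
      exact ⟨e, Or.inl (Or.inl he), hadj⟩
  have huvD : ({u, v} : Set V) ⊆ D := by
    intro z hz; rcases hz with rfl | rfl
    · exact hu
    · exact hv
  have h2γ : 2 ≤ D.ncard := by
    calc 2 = ({u, v} : Set V).ncard := (Set.ncard_pair huv).symm
    _ ≤ D.ncard := Set.ncard_le_ncard huvD (Set.toFinite D)
  have hcard : T.ncard ≤ D.ncard + (D.ncard - 2) + 1 := by
    calc T.ncard ≤ (D ∪ f '' (D \ {u, v})).ncard + ({x} : Set V).ncard :=
          Set.ncard_union_le _ _
    _ ≤ (D.ncard + (f '' (D \ {u, v})).ncard) + 1 := by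
          gcongr
          · exact Set.ncard_union_le _ _
          · exact le_of_eq (Set.ncard_singleton x)
    _ ≤ (D.ncard + (D \ {u, v}).ncard) + 1 := by
          have := Set.ncard_image_le (f := f) (s := D \ {u, v}) (Set.toFinite _); omega
    _ = D.ncard + (D.ncard - 2) + 1 := by
          rw [Set.ncard_diff huvD (Set.toFinite _), Set.ncard_pair huv]
  have hle := totalDomNum_le hTtot
  rw [h, hc] at *
  omega

lemma swap_gammaSet (hiso : NoIsolated G) (h : totalDomNum G = 2 * domNum G)
    {D : Set V} (hD : IsDomSet G D) (hc : D.ncard = domNum G)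
    {e v : V} (he : e ∈ D) (hsub : cnbr G e ⊆ cnbr G v) :
    ∃ D' : Set V, IsDomSet G D' ∧ D'.ncard = domNum G ∧ v ∈ D' ∧
      ∀ w ∈ D, w ≠ e → w ∈ D' := by
  by_cases hvD : v ∈ D
  · have hvecn : v ∈ cnbr G e := cnbr_comm (hsub (self_mem_cnbr G e))
    have hveq : v = e := by
      by_contra hne
      have hdis := gammaSet_packing hiso h hD hc he hvD (fun hh => hne hh.symm)
      exact Set.disjoint_left.mp hdis hvecn (self_mem_cnbr G v)
    subst hveq
    exact ⟨D, hD, hc, hvD, fun w hw _ => hw⟩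
  · refine ⟨insert v (D \ {e}), ?_, ?_, Set.mem_insert _ _, ?_⟩
    · intro w hw
      by_cases hwe : w ∈ cnbr G e
      · have hwv : w ∈ cnbr G v := hsub hwe
        have hwnv : w ≠ v := fun hh => hw (hh ▸ Set.mem_insert _ _)
        exact ⟨v, Set.mem_insert _ _, adj_of_mem_cnbr hwv hwnv⟩
      · have hwD : w ∉ D := by
          intro hwD
          have : w ≠ e := fun hh => hwe (hh ▸ self_mem_cnbr G e)
          exact hw (Set.mem_insert_of_mem _ ⟨hwD, this⟩)
        obtain ⟨t, ht, hadj⟩ := hD w hwD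
        have hte : t ≠ e := fun hh => hwe (hh ▸ mem_cnbr_of_adj hadj)
        exact ⟨t, Set.mem_insert_of_mem _ ⟨ht, hte⟩, hadj⟩
    · have hvni : v ∉ D \ {e} := fun hh => hvD hh.1
      have h1 : 1 ≤ D.ncard := by
        have : (0 : ℕ) < D.ncard := (Set.ncard_pos (Set.toFinite D)).mpr ⟨e, he⟩
        omega
      rw [Set.ncard_insert_of_notMem hvni (Set.toFinite _),
        Set.ncard_diff (Set.singleton_subset_iff.mpr he) (Set.toFinite _),
        Set.ncard_singleton]
      omega
    · intro w hw hwe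
      exact Set.mem_insert_of_mem _ ⟨hw, hwe⟩

lemma key_lemma (hiso : NoIsolated G) (h : totalDomNum G = 2 * domNum G)
    {D : Set V} (hD : IsDomSet G D) (hc : D.ncard = domNum G)
    {v : V} (hv : Special G v) : ∃ e ∈ D, cnbr G e ⊆ cnbr G v := by
  by_cases hvD : v ∈ D
  · exact ⟨v, hvD, subset_rfl⟩
  obtain ⟨e, he, hadj⟩ := hD v hvD
  by_cases hsub : cnbr G e ⊆ cnbr G v
  · exact ⟨e, he, hsub⟩
  obtain ⟨x, hxe, hxv⟩ := Set.not_subset.mp hsub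
  have hxne : x ≠ e := fun hh => hxv (hh ▸ mem_cnbr_of_adj hadj.symm)
  have heM : e ∈ Mset G v := ⟨hadj.symm, x, adj_of_mem_cnbr hxe hxne, hxv⟩
  have hnsub : ¬ Dset G v ⊆ G.neighborSet e := fun hcon => hv.2 ⟨e, heM, hcon⟩
  obtain ⟨y, hyD, hyN⟩ := Set.not_subset.mp hnsub
  obtain ⟨hvy, hyne, hysub⟩ := hyD
  have hyce : y ∉ cnbr G e := by
    intro hyce
    rcases mem_cnbr.mp hyce with rfl | hadj2
    · exact hsub hysub
    · exact hyN hadj2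
  obtain ⟨e', he', hye'⟩ := exists_dominator hD y
  have hee' : e ≠ e' := fun hh => hyce (hh ▸ hye')
  have hve' : v ∈ cnbr G e' := cnbr_comm (hysub (cnbr_comm hye'))
  have hdis := gammaSet_packing hiso h hD hc he he' hee'
  exact (Set.disjoint_left.mp hdis (mem_cnbr_of_adj hadj) hve').elim

lemma not_nested {u v : V} (hu : Special G u) (hne : cnbr G u ≠ cnbr G v)
    (hsub : cnbr G u ⊆ cnbr G v) (huv : u ≠ v) : False := by
  have hvcu : v ∈ cnbr G u := cnbr_comm (hsub (self_mem_cnbr G u))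
  have hadj : G.Adj u v := adj_of_mem_cnbr hvcu (Ne.symm huv)
  obtain ⟨x, hxv, hxu⟩ := Set.exists_of_ssubset (hsub.ssubset_of_ne hne)
  have hxnv : x ≠ v := fun hh => hxu (hh ▸ hvcu)
  have hvM : v ∈ Mset G u := ⟨hadj, x, adj_of_mem_cnbr hxv hxnv, hxu⟩
  have hnsub : ¬ Dset G u ⊆ G.neighborSet v := fun hcon => hu.2 ⟨v, hvM, hcon⟩
  obtain ⟨y, hyD, hyN⟩ := Set.not_subset.mp hnsub
  obtain ⟨huy, hyne, hysub⟩ := hyD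
  have hynv : y ≠ v := by
    rintro rfl
    exact hyne (le_antisymm hysub hsub)
  exact hyN (adj_of_mem_cnbr (hsub (hysub (self_mem_cnbr G y))) hynv)

end Lemmas2
section Lemmas3

variable {V : Type*} [Fintype V] {G : SimpleGraph V}

lemma gamma_special (hiso : NoIsolated G)
    (hH1 : Free H1 G) (hH2 : Free H2 G) (hC6 : Free (cycleGraph 6) G)
    (h : totalDomNum G = 2 * domNum G)
    {D : Set V} (hD : IsDomSet G D) (hc : D.ncard = domNum G) :
    ∀ d ∈ D, Special G d := by
  intro d hd
  by_contra hns
  have hP := gammaSet_packing hiso h hD hc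
  have hnb : (G.neighborSet d).Nonempty := by
    obtain ⟨z, hz⟩ := hiso d; exact ⟨z, hz⟩
  have hex : ∃ u ∈ Mset G d, Dset G d ⊆ G.neighborSet u := by
    by_contra hcon; exact hns ⟨hnb, hcon⟩
  obtain ⟨u, huM, huD⟩ := hex
  obtain ⟨hdu, w, huw, hwout⟩ := huM
  -- the sets Z y e and Y e
  set Z : V → V → Set V := fun y e => G.neighborSet y ∩ cnbr G e with hZ
  set Y : V → Set V := fun e => {y | G.Adj d y ∧ (Z y e).Nonempty} with hY
  -- comparability via freeness
  have hcomp : ∀ e ∈ D, e ≠ d → ∀ y1 ∈ Y e, ∀ y2 ∈ Y e,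
      Z y1 e ⊆ Z y2 e ∨ Z y2 e ⊆ Z y1 e := by
    intro e heD hed y1 hy1 y2 hy2
    by_cases hyy : y1 = y2
    · exact Or.inl (hyy ▸ subset_rfl)
    by_contra hcon
    push_neg at hcon
    obtain ⟨z1, hz1, hz1n⟩ := Set.not_subset.mp hcon.1
    obtain ⟨z2, hz2, hz2n⟩ := Set.not_subset.mp hcon.2
    have hdis : Disjoint (cnbr G d) (cnbr G e) := hP hd heD (fun hh => hed hh.symm)
    have hsep : ∀ a b : V, a ∈ cnbr G d → b ∈ cnbr G e → a ≠ b := by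
      intro a b ha hb heq
      exact Set.disjoint_left.mp hdis ha (heq ▸ hb)
    have hy1d : y1 ∈ cnbr G d := mem_cnbr_of_adj hy1.1
    have hy2d : y2 ∈ cnbr G d := mem_cnbr_of_adj hy2.1
    have hz1e : z1 ∈ cnbr G e := hz1.2
    have hz2e : z2 ∈ cnbr G e := hz2.2
    have hy1z1 : G.Adj y1 z1 := hz1.1
    have hy2z2 : G.Adj y2 z2 := hz2.1
    have n02 : ¬ G.Adj d z1 := fun hh =>
      Set.disjoint_left.mp hdis (mem_cnbr_of_adj hh) hz1e
    have n03 : ¬ G.Adj d e := fun hh =>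
      Set.disjoint_left.mp hdis (mem_cnbr_of_adj hh) (self_mem_cnbr G e)
    have n04 : ¬ G.Adj d z2 := fun hh =>
      Set.disjoint_left.mp hdis (mem_cnbr_of_adj hh) hz2e
    have n13 : ¬ G.Adj y1 e := fun hh =>
      Set.disjoint_left.mp hdis hy1d (mem_cnbr_of_adj hh.symm)
    have n14 : ¬ G.Adj y1 z2 := fun hh => hz2n ⟨hh, hz2e⟩
    have n25 : ¬ G.Adj z1 y2 := fun hh => hz1n ⟨hh.symm, hz1e⟩
    have n35 : ¬ G.Adj e y2 := fun hh =>
      Set.disjoint_left.mp hdis hy2d (mem_cnbr_of_adj hh)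
    have hz1ne : z1 ≠ e := fun hh => n13 (hh ▸ hy1z1)
    have hz2ne : z2 ≠ e := fun hh => (fun hh2 =>
      Set.disjoint_left.mp hdis hy2d (mem_cnbr_of_adj hh2.symm)) (hh ▸ hy2z2)
    have a23 : G.Adj z1 e := (adj_of_mem_cnbr hz1e hz1ne).symm
    have a34 : G.Adj e z2 := adj_of_mem_cnbr hz2e hz2ne
    have hz12 : z1 ≠ z2 := fun hh => hz1n (hh ▸ hz2)
    exact no_config G hH1 hH2 hC6 d y1 z1 e z2 y2
      hy1.1 hy1z1 a23 a34 hy2z2.symm hy2.1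
      n02 n03 n04 n13 n14 n25 n35
      (hsep d z1 (self_mem_cnbr G d) hz1e)
      (hsep d e (self_mem_cnbr G d) (self_mem_cnbr G e))
      (hsep d z2 (self_mem_cnbr G d) hz2e)
      (hsep y1 e hy1d (self_mem_cnbr G e))
      (hsep y1 z2 hy1d hz2e)
      (Ne.symm (hsep y2 z1 hy2d hz1e))
      (Ne.symm (hsep y2 e hy2d (self_mem_cnbr G e)))
      hyy hz12
  -- common helper neighbor
  have hcommon : ∀ e, e ∈ D → e ≠ d → ∃ z, G.Adj e z ∧ ∀ y ∈ Y e, G.Adj y z := by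
    intro e heD hed
    by_cases hYe : (Y e).Nonempty
    · obtain ⟨y0, hy0, hmin⟩ :=
        Set.exists_min_image (Y e) (fun y => (Z y e).ncard) (Set.toFinite _) hYe
      obtain ⟨z, hzy0, hze⟩ := hy0.2
      have hzne : z ≠ e := by
        intro hh
        subst hh
        exact Set.disjoint_left.mp (hP hd heD (fun hh2 => hed hh2.symm))
          (mem_cnbr_of_adj hy0.1) (mem_cnbr_of_adj hzy0.symm)
      refine ⟨z, adj_of_mem_cnbr hze hzne, ?_⟩
      intro y hy
      rcases hcomp e heD hed y0 hy0 y hy with hss | hss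
      · exact (hss ⟨hzy0, hze⟩).1
      · have heq := Set.eq_of_subset_of_ncard_le hss (hmin y hy) (Set.toFinite _)
        have : z ∈ Z y e := heq ▸ (⟨hzy0, hze⟩ : z ∈ Z y0 e)
        exact this.1
    · obtain ⟨z, hz⟩ := hiso e
      exact ⟨z, hz, fun y hy => absurd ⟨y, hy⟩ hYe⟩
  choose! F hF1 hF2 using hcommon
  -- the cheap total dominating set
  set T : Set V := ((D \ {d}) ∪ F '' (D \ {d})) ∪ {u} with hT
  have hTtot : IsTotalDomSet G T := by
    intro x
    by_cases hxc : x ∈ cnbr G d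
    · by_cases hxd : x = d
      · exact ⟨u, Or.inr rfl, hxd ▸ hdu.symm⟩
      have hadj_dx : G.Adj d x := adj_of_mem_cnbr hxc hxd
      by_cases hext : ∃ p, G.Adj x p ∧ p ∉ cnbr G d
      · obtain ⟨p, hxp, hpout⟩ := hext
        obtain ⟨e, heD, hpe⟩ := exists_dominator hD p
        have hed : e ≠ d := fun hh => hpout (hh ▸ hpe)
        have hxY : x ∈ Y e := ⟨hadj_dx, p, hxp, hpe⟩
        exact ⟨F e, Or.inl (Or.inr ⟨e, ⟨heD, hed⟩, rfl⟩),
          (hF2 e heD hed x hxY).symm⟩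
      · push_neg at hext
        have hsubx : cnbr G x ⊆ cnbr G d := by
          intro p hp
          rcases mem_cnbr.mp hp with rfl | hadj2
          · exact hxc
          · exact hext p hadj2
        by_cases htwin : cnbr G x = cnbr G d
        · have hux : u ≠ x := by
            rintro rfl
            exact hwout (htwin ▸ mem_cnbr_of_adj huw)
          have humem : u ∈ cnbr G x := htwin ▸ mem_cnbr_of_adj hdu
          exact ⟨u, Or.inr rfl, (adj_of_mem_cnbr humem hux).symm⟩
        · have hxDset : x ∈ Dset G d := ⟨hadj_dx, htwin, hsubx⟩
          exact ⟨u, Or.inr rfl, huD hxDset⟩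
    · obtain ⟨e, heD, hxe⟩ := exists_dominator hD x
      have hed : e ≠ d := fun hh => hxc (hh ▸ hxe)
      by_cases hxee : x = e
      · exact ⟨F e, Or.inl (Or.inr ⟨e, ⟨heD, hed⟩, rfl⟩),
          (hxee ▸ (hF1 e heD hed).symm)⟩
      · exact ⟨e, Or.inl (Or.inl ⟨heD, hed⟩), adj_of_mem_cnbr hxe hxee⟩
  -- cardinality contradiction
  have hdD : ({d} : Set V) ⊆ D := Set.singleton_subset_iff.mpr hd
  have h1 : 1 ≤ D.ncard := by
    have : (0 : ℕ) < D.ncard := (Set.ncard_pos (Set.toFinite D)).mpr ⟨d, hd⟩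
    omega
  have hdiff : (D \ {d}).ncard = D.ncard - 1 := by
    rw [Set.ncard_diff hdD (Set.toFinite _), Set.ncard_singleton]
  have hcard : T.ncard ≤ (D.ncard - 1) + (D.ncard - 1) + 1 := by
    calc T.ncard ≤ ((D \ {d}) ∪ F '' (D \ {d})).ncard + ({u} : Set V).ncard :=
          Set.ncard_union_le _ _
    _ ≤ ((D \ {d}).ncard + (F '' (D \ {d})).ncard) + 1 := by
          have := Set.ncard_union_le (D \ {d}) (F '' (D \ {d}))
          have h2 : ({u} : Set V).ncard = 1 := Set.ncard_singleton u
          omega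
    _ ≤ (D.ncard - 1) + (D.ncard - 1) + 1 := by
          have := Set.ncard_image_le (f := F) (s := D \ {d}) (Set.toFinite _)
          omega
  have hle := totalDomNum_le hTtot
  rw [h, hc] at *
  omega

end Lemmas3


/-- For an `(H₁,H₂,C₆)`-free graph `G` with no isolated vertices satisfying `γₜ(G) = 2γ(G)`,
every `S(G)`-set is both a packing and a dominating set of `G`. -/
theorem stmt6 {V : Type*} [Fintype V] (G : SimpleGraph V) (hiso : NoIsolated G)
    (hH1 : Free H1 G) (hH2 : Free H2 G) (hC6 : Free (cycleGraph 6) G)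
    (S : Set V) (hS : IsSGSet G S)
    (h : totalDomNum G = 2 * domNum G) :
    IsPacking G S ∧ IsDomSet G S := by
  obtain ⟨D, hD, hc⟩ := exists_gammaSet G
  constructor
  · intro u hu v hv huv
    have su := hS.1 u hu
    have sv := hS.1 v hv
    have hcn : cnbr G u ≠ cnbr G v := by
      intro hcn
      obtain ⟨t, ht, huniq⟩ := hS.2 u su
      have h1 : u = t := huniq u ⟨hu, rfl⟩
      have h2 : v = t := huniq v ⟨hv, hcn.symm⟩
      exact huv (h1.trans h2.symm)
    obtain ⟨e, he, hsub⟩ := key_lemma hiso h hD hc su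
    obtain ⟨D2, hD2, hc2, huD2, _⟩ := swap_gammaSet hiso h hD hc he hsub
    obtain ⟨e', he', hsub'⟩ := key_lemma hiso h hD2 hc2 sv
    have he'u : e' ≠ u := by
      rintro rfl
      exact not_nested su hcn hsub' huv
    obtain ⟨D3, hD3, hc3, hvD3, hkeep⟩ := swap_gammaSet hiso h hD2 hc2 he' hsub'
    have huD3 : u ∈ D3 := hkeep u huD2 (fun hh => he'u hh.symm)
    exact gammaSet_packing hiso h hD3 hc3 huD3 hvD3 huv
  · intro w hw
    obtain ⟨e, he, hwe⟩ := exists_dominator hD w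
    have hspec := gamma_special hiso hH1 hH2 hC6 h hD hc e he
    obtain ⟨t, ⟨htS, htT⟩, _⟩ := hS.2 e hspec
    have hwt : w ∈ cnbr G t := by
      have htT' : cnbr G t = cnbr G e := htT
      rw [htT']; exact hwe
    have hwnt : w ≠ t := fun hh => hw (hh ▸ htS)
    exact ⟨t, htS, adj_of_mem_cnbr hwt hwnt⟩

end TotalDom
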